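/- If an arc uv of a tournament lies in more than k distinct directed triangles, then every feedback arc set of size at most k must contain the arc uv. -/

import Mathlib

/-- A tournament: irreflexive, and exactly one arc between every pair of distinct vertices. -/
def IsTournament {V : Type*} (r : V → V → Prop) : Prop :=
  (∀ v, ¬ r v v) ∧ ∀ u v : V, u ≠ v → (r u v ↔ ¬ r v u)

/-- A digraph (given by its arc relation) is acyclic: no directed cycle. -/
def Acyclic {V : Type*} (r : V → V → Prop) : Prop :=
  ∀ v, ¬ Relation.TransGen r v v

/-- If the arc `uv` lies in more than `k` distinct directed triangles, then every
feedback arc set of size at most `k` contains `uv`. -/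
theorem stmt2 {V : Type*} [Fintype V] (r : V → V → Prop) (hT : IsTournament r)
    (u v : V) (huv : r u v) (k : ℕ)
    (htri : k < {w : V | r v w ∧ r w u}.ncard)
    (F : Finset (V × V)) (hF : F.card ≤ k)
    (hfas : Acyclic (fun a b => r a b ∧ (a, b) ∉ F)) :
    (u, v) ∈ F := by
  classical
  by_contra hnot
  set S : Set V := {w : V | r v w ∧ r w u} with hS
  -- for each w in S, (v,w) ∈ F or (w,u) ∈ F
  have key : ∀ w ∈ S, (v, w) ∈ F ∨ (w, u) ∈ F := by
    intro w hw
    by_contra h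
    push_neg at h
    exact hfas u (Relation.TransGen.head ⟨huv, hnot⟩
      (Relation.TransGen.head ⟨hw.1, h.1⟩ (Relation.TransGen.single ⟨hw.2, h.2⟩)))
  have hinj : Set.InjOn (fun w => if (v, w) ∈ F then (v, w) else (w, u)) S := by
    intro a ha b hb hab
    simp only at hab
    split_ifs at hab with h1 h2 h2
    · exact (Prod.mk.injEq .. ▸ hab).2
    · -- (v,a) = (b,u) : then a = u, contradiction with r a u (irrefl)
      obtain ⟨h3, h4⟩ := Prod.mk.injEq .. ▸ hab
      exact absurd (h4 ▸ ha.2) (hT.1 u)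
    · obtain ⟨h3, h4⟩ := Prod.mk.injEq .. ▸ hab
      exact absurd (h4 ▸ hb.2) (hT.1 b)
    · exact (Prod.mk.injEq .. ▸ hab).1
  have hmaps : ∀ w ∈ S, (fun w => if (v, w) ∈ F then (v, w) else (w, u)) w ∈ (F : Set (V × V)) := by
    intro w hw
    by_cases h : (v, w) ∈ F
    · simp [h]
    · simp [h]
      exact (key w hw).resolve_left h
  have := Set.ncard_le_ncard_of_injOn _ hmaps hinj (F : Set (V × V)).toFinite
  rw [Set.ncard_coe_finset] at this
  omega
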